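/- For every nonnegative integer D, there exists a planar graph all of whose cycles have length 3 or 4 that is not (0, 0, D)-colorable. -/

import Mathlib

open SimpleGraph

/-- `H` is a minor of `G`: branch sets are nonempty, connected, pairwise disjoint,
and edges of `H` are realized between branch sets. -/
def SimpleGraph.IsMinor {W V : Type*} (H : SimpleGraph W) (G : SimpleGraph V) : Prop :=
  ∃ f : W → Set V, (∀ w, (f w).Nonempty) ∧ (∀ w, (G.induce (f w)).Connected) ∧
    (∀ w w', w ≠ w' → Disjoint (f w) (f w')) ∧
    (∀ w w', H.Adj w w' → ∃ a ∈ f w, ∃ b ∈ f w', G.Adj a b)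

/-- A graph is planar iff it has no `K₅` minor and no `K₃,₃` minor (Wagner's theorem). -/
def SimpleGraph.Planar {V : Type*} (G : SimpleGraph V) : Prop :=
  ¬ (completeGraph (Fin 5)).IsMinor G ∧
    ¬ (completeBipartiteGraph (Fin 3) (Fin 3)).IsMinor G

/-- `G` contains no cycle of length `n` (as a subgraph). -/
def SimpleGraph.HasNoCycleOfLength {V : Type*} (G : SimpleGraph V) (n : ℕ) : Prop :=
  ∀ (v : V) (w : G.Walk v v), w.IsCycle → w.length ≠ n

/-- `f` is a `(d 0, …, d (k-1))`-coloring of `G`: each vertex has at most `d (f v)`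
neighbors in its own color class. -/
def SimpleGraph.IsDefectiveColoring {V : Type*} {k : ℕ} (G : SimpleGraph V)
    (d : Fin k → ℕ) (f : V → Fin k) : Prop :=
  ∀ v, {u | G.Adj v u ∧ f u = f v}.ncard ≤ d (f v)

/-- `G` is `(d 0, …, d (k-1))`-colorable. -/
def SimpleGraph.DefectiveColorable {V : Type*} {k : ℕ} (G : SimpleGraph V)
    (d : Fin k → ℕ) : Prop :=
  ∃ f : V → Fin k, G.IsDefectiveColoring d f

namespace X5

/-- Vertex type of the construction `X(D)`. -/
abbrev Vt (D : ℕ) : Type := Fin 3 × (Unit ⊕ (Fin (D+1) × Fin 3))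

/-- The apex of copy `i`. -/
def apx (D : ℕ) (i : Fin 3) : Vt D := (i, Sum.inl ())

/-- Vertex `k` of triangle `j` in copy `i`. -/
def tvx (D : ℕ) (i : Fin 3) (j : Fin (D+1)) (k : Fin 3) : Vt D := (i, Sum.inr (j, k))

/-- The graph `X(D)`. -/
def GD (D : ℕ) : SimpleGraph (Vt D) where
  Adj a b :=
    (a.1 ≠ b.1 ∧ a.2 = Sum.inl () ∧ b.2 = Sum.inl ()) ∨
    (a.1 = b.1 ∧ a.2 = Sum.inl () ∧ b.2 ≠ Sum.inl ()) ∨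
    (a.1 = b.1 ∧ b.2 = Sum.inl () ∧ a.2 ≠ Sum.inl ()) ∨
    (a.1 = b.1 ∧ ∃ j k k', k ≠ k' ∧ a.2 = Sum.inr (j, k) ∧ b.2 = Sum.inr (j, k'))
  symm := by
    refine ⟨?_⟩
    rintro a b (⟨h1, h2, h3⟩ | ⟨h1, h2, h3⟩ | ⟨h1, h2, h3⟩ | ⟨h1, j, k, k', hk, h2, h3⟩)
    · exact Or.inl ⟨h1.symm, h3, h2⟩
    · exact Or.inr (Or.inr (Or.inl ⟨h1.symm, h2, h3⟩))
    · exact Or.inr (Or.inl ⟨h1.symm, h2, h3⟩)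
    · exact Or.inr (Or.inr (Or.inr ⟨h1.symm, j, k', k, hk.symm, h3, h2⟩))
  loopless := by
    refine ⟨?_⟩
    rintro a (⟨h1, _, _⟩ | ⟨_, h2, h3⟩ | ⟨_, h2, h3⟩ | ⟨_, j, k, k', hk, h2, h3⟩)
    · exact h1 rfl
    · exact h3 h2
    · exact h3 h2
    · rw [h2] at h3; injection h3 with h3; exact hk (Prod.ext_iff.1 h3).2

variable {D : ℕ}

lemma apx_ne_tvx {i i' : Fin 3} {j : Fin (D+1)} {k : Fin 3} : apx D i ≠ tvx D i' j k := by
  simp [apx, tvx]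

lemma tvx_inj {i i' : Fin 3} {j j' : Fin (D+1)} {k k' : Fin 3} :
    tvx D i j k = tvx D i' j' k' ↔ i = i' ∧ j = j' ∧ k = k' := by
  simp [tvx, Prod.ext_iff]

lemma apx_inj {i i' : Fin 3} : apx D i = apx D i' ↔ i = i' := by
  simp [apx, Prod.ext_iff]

lemma vert_cases (a : Vt D) : (∃ i, a = apx D i) ∨ ∃ i j k, a = tvx D i j k := by
  obtain ⟨i, x⟩ := a
  rcases x with u | ⟨j, k⟩
  · exact Or.inl ⟨i, by simp [apx]⟩
  · exact Or.inr ⟨i, j, k, rfl⟩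

lemma adj_apx_apx {i i' : Fin 3} (h : i ≠ i') : (GD D).Adj (apx D i) (apx D i') :=
  Or.inl ⟨h, rfl, rfl⟩

lemma adj_apx_tvx {i : Fin 3} {j : Fin (D+1)} {k : Fin 3} :
    (GD D).Adj (apx D i) (tvx D i j k) :=
  Or.inr (Or.inl ⟨rfl, rfl, by simp [tvx, apx]⟩)

lemma adj_tvx_tvx {i : Fin 3} {j : Fin (D+1)} {k k' : Fin 3} (h : k ≠ k') :
    (GD D).Adj (tvx D i j k) (tvx D i j k') :=
  Or.inr (Or.inr (Or.inr ⟨rfl, j, k, k', h, rfl, rfl⟩))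

/-- The triangle `j` in copy `i`. -/
def triS (D : ℕ) (i : Fin 3) (j : Fin (D+1)) : Set (Vt D) := {a | ∃ k, a = tvx D i j k}

/-- The `K₄` block: apex `i` together with triangle `j`. -/
def SS (D : ℕ) (i : Fin 3) (j : Fin (D+1)) : Set (Vt D) :=
  {a | a = apx D i ∨ ∃ k, a = tvx D i j k}

lemma apx_mem_SS {i : Fin 3} {j : Fin (D+1)} : apx D i ∈ SS D i j := Or.inl rfl

lemma tri_subset_SS {i : Fin 3} {j : Fin (D+1)} : triS D i j ⊆ SS D i j :=
  fun _ h => Or.inr h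

lemma apx_not_mem_triS {i l : Fin 3} {j : Fin (D+1)} : apx D l ∉ triS D i j := by
  rintro ⟨k, hk⟩; exact apx_ne_tvx hk

/-- Any neighbour of a triangle vertex stays in its `K₄` block. -/
lemma adj_mem_SS {a b : Vt D} {i : Fin 3} {j : Fin (D+1)}
    (h : (GD D).Adj a b) (ha : a ∈ triS D i j) : b ∈ SS D i j := by
  obtain ⟨k, rfl⟩ := ha
  rcases h with (⟨_, h2, _⟩ | ⟨_, h2, _⟩ | ⟨h1, h2, _⟩ | ⟨h1, j', k0, k', _, h2, h3⟩)
  · exact absurd h2 (by simp [tvx])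
  · exact absurd h2 (by simp [tvx])
  · left
    have hb1 : b.1 = i := by
      have : (tvx D i j k).1 = b.1 := h1
      simpa [tvx] using this.symm
    exact Prod.ext hb1 h2
  · have hj : j' = j ∧ k0 = k := by
      have : (tvx D i j k).2 = Sum.inr (j', k0) := h2
      have h := this
      simp [tvx, Prod.ext_iff] at h
      exact ⟨h.1.symm, h.2.symm⟩
    right
    refine ⟨k', ?_⟩
    have hb1 : b.1 = i := by
      have : (tvx D i j k).1 = b.1 := h1
      simpa [tvx] using this.symm
    rw [← hj.1]
    exact Prod.ext hb1 h3

/-- A walk from a triangle vertex out of its `K₄` block passes through the apex. -/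
lemma walk_pass {i : Fin 3} {j : Fin (D+1)} :
    ∀ {a b : Vt D} (p : (GD D).Walk a b),
      a ∈ triS D i j → b ∉ SS D i j → apx D i ∈ p.support.tail := by
  intro a b p
  induction p with
  | nil => exact fun ha hb => absurd (tri_subset_SS ha) hb
  | @cons a c b h q ih =>
    intro ha hb
    rcases adj_mem_SS h ha with hc | hc
    · rw [Walk.support_cons]
      exact hc ▸ q.start_mem_support
    · rw [Walk.support_cons]
      exact List.mem_of_mem_tail (ih hc hb)

/-- A connected set meeting a triangle and leaving its block contains the apex. -/
lemma conn_pass {B : Set (Vt D)} (hB : ((GD D).induce B).Connected) {u x : Vt D}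
    {i : Fin 3} {j : Fin (D+1)} (hu : u ∈ B) (hut : u ∈ triS D i j)
    (hx : x ∈ B) (hxs : x ∉ SS D i j) : apx D i ∈ B := by
  obtain ⟨w⟩ := hB ⟨u, hu⟩ ⟨x, hx⟩
  have hp := walk_pass (w.map (SimpleGraph.Embedding.induce B).toHom) hut hxs
  have hmem : apx D i ∈ (w.map (SimpleGraph.Embedding.induce B).toHom).support :=
    List.mem_of_mem_tail hp
  rw [Walk.support_map] at hmem
  obtain ⟨y, _, hyv⟩ := List.mem_map.1 hmem
  exact hyv ▸ y.2

/-- An apex-free connected set meeting a triangle is inside that triangle. -/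
lemma conn_sub {B : Set (Vt D)} (hB : ((GD D).induce B).Connected)
    (hfree : ∀ l, apx D l ∉ B) {u : Vt D} {i : Fin 3} {j : Fin (D+1)}
    (hu : u ∈ B) (hut : u ∈ triS D i j) : B ⊆ triS D i j := by
  intro x hx
  by_cases hxs : x ∈ SS D i j
  · rcases hxs with h | h
    · exact absurd (h ▸ hx) (hfree i)
    · exact h
  · exact absurd (conn_pass hB hu hut hx hxs) (hfree i)

lemma tail_length {v' : Vt D} (w' : (GD D).Walk v' v') :
    w'.support.tail.length = w'.length := by
  have h1 := w'.length_support
  rw [w'.support_eq_cons, List.length_cons] at h1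
  omega

lemma cycle_len {v : Vt D} (w : (GD D).Walk v v) (hc : w.IsCycle) :
    w.length = 3 ∨ w.length = 4 := by
  classical
  have h3 := hc.three_le_length
  rcases Classical.em (∃ i j k, tvx D i j k ∈ w.support) with htv | htv
  · obtain ⟨i, j, k, hmem⟩ := htv
    set w' := w.rotate _ hmem with hw'
    have hc' : w'.IsCycle := hc.rotate hmem
    have hlen : w'.length = w.length := by
      have hperm := (w.support_rotate _ hmem).perm.length_eq
      rw [← hw'] at hperm
      have h1 := tail_length w
      have h2 := tail_length w'
      omega
    rcases Classical.em (∀ x ∈ w'.support, x ∈ SS D i j) with hin | hin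
    · -- the cycle stays in one K₄ block, so it has length ≤ 4
      have hnd := hc'.support_nodup
      have hsub : w'.support.tail.toFinset ⊆
          ({apx D i, tvx D i j 0, tvx D i j 1, tvx D i j 2} : Finset (Vt D)) := by
        intro x hxm
        rw [List.mem_toFinset] at hxm
        rcases hin x (List.mem_of_mem_tail hxm) with h | ⟨kk, h⟩
        · simp [h]
        · fin_cases kk <;> simp [h]
      have hcard := Finset.card_le_card hsub
      rw [List.toFinset_card_of_nodup hnd] at hcard
      have b1 := Finset.card_insert_le (apx D i)
        ({tvx D i j 0, tvx D i j 1, tvx D i j 2} : Finset (Vt D))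
      have b2 := Finset.card_insert_le (tvx D i j 0)
        ({tvx D i j 1, tvx D i j 2} : Finset (Vt D))
      have b3 := Finset.card_insert_le (tvx D i j 1) ({tvx D i j 2} : Finset (Vt D))
      have b4 : ({tvx D i j 2} : Finset (Vt D)).card = 1 := Finset.card_singleton _
      have h1 := tail_length w'
      omega
    · -- the cycle leaves the block: it must pass through the apex twice, impossible
      push_neg at hin
      obtain ⟨x, hx, hxs⟩ := hin
      exfalso
      have hu : (tvx D i j k) ∈ triS D i j := ⟨k, rfl⟩
      have hap : apx D i ∈ (w'.takeUntil x hx).support.tail := walk_pass _ hu hxs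
      have haq : apx D i ∈ (w'.dropUntil x hx).support.tail := by
        have h1 := walk_pass (w'.dropUntil x hx).reverse hu hxs
        have h2 : apx D i ∈ (w'.dropUntil x hx).support := by
          have := List.mem_of_mem_tail h1
          rw [Walk.support_reverse, List.mem_reverse] at this
          exact this
        have hne : apx D i ≠ x := fun h => hxs (h ▸ apx_mem_SS)
        rw [(w'.dropUntil x hx).support_eq_cons] at h2
        rcases List.mem_cons.1 h2 with h | h
        · exact absurd h hne
        · exact h
      have hsplit : w'.support.tail =
          (w'.takeUntil x hx).support.tail ++ (w'.dropUntil x hx).support.tail := by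
        conv_lhs => rw [← w'.take_spec hx]
        rw [Walk.support_append, (w'.takeUntil x hx).support_eq_cons]
        simp
      have hnd := hc'.support_nodup
      rw [hsplit] at hnd
      exact (List.disjoint_of_nodup_append hnd) hap haq
  · -- the cycle lies in the apex triangle
    push_neg at htv
    left
    have hsub : w.support.tail.toFinset ⊆ ({apx D 0, apx D 1, apx D 2} : Finset (Vt D)) := by
      intro x hxm
      rw [List.mem_toFinset] at hxm
      have hxs := List.mem_of_mem_tail hxm
      rcases vert_cases x with ⟨l, rfl⟩ | ⟨i, j, k, rfl⟩
      · fin_cases l <;> simp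
      · exact absurd hxs (htv i j k)
    have hcard := Finset.card_le_card hsub
    rw [List.toFinset_card_of_nodup hc.support_nodup] at hcard
    have b1 := Finset.card_insert_le (apx D 0) ({apx D 1, apx D 2} : Finset (Vt D))
    have b2 := Finset.card_insert_le (apx D 1) ({apx D 2} : Finset (Vt D))
    have b3 : ({apx D 2} : Finset (Vt D)).card = 1 := Finset.card_singleton _
    have h1 := tail_length w
    omega

/-- The `K₄` block as a finset. -/
def TF (D : ℕ) (i : Fin 3) (j : Fin (D+1)) : Finset (Vt D) :=
  {apx D i, tvx D i j 0, tvx D i j 1, tvx D i j 2}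

lemma TF_card {i : Fin 3} {j : Fin (D+1)} : (TF D i j).card ≤ 4 := by
  have b1 := Finset.card_insert_le (apx D i)
    ({tvx D i j 0, tvx D i j 1, tvx D i j 2} : Finset (Vt D))
  have b2 := Finset.card_insert_le (tvx D i j 0)
    ({tvx D i j 1, tvx D i j 2} : Finset (Vt D))
  have b3 := Finset.card_insert_le (tvx D i j 1) ({tvx D i j 2} : Finset (Vt D))
  have b4 : ({tvx D i j 2} : Finset (Vt D)).card = 1 := Finset.card_singleton _
  have : (TF D i j).card = (insert (apx D i)
      ({tvx D i j 0, tvx D i j 1, tvx D i j 2} : Finset (Vt D))).card := rfl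
  omega

lemma mem_TF_of_SS {x : Vt D} {i : Fin 3} {j : Fin (D+1)} (h : x ∈ SS D i j) :
    x ∈ TF D i j := by
  rcases h with h | ⟨kk, h⟩
  · simp [TF, h]
  · fin_cases kk <;> simp [TF, h]

lemma tvx_mem_TF {i : Fin 3} {j : Fin (D+1)} {k : Fin 3} : tvx D i j k ∈ TF D i j := by
  fin_cases k <;> simp [TF]

lemma apx_mem_SS_iff {l i : Fin 3} {j : Fin (D+1)} : apx D l ∈ SS D i j ↔ l = i := by
  constructor
  · rintro (h | ⟨k, h⟩)
    · exact apx_inj.1 h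
    · exact absurd h apx_ne_tvx
  · rintro rfl; exact apx_mem_SS

lemma tvx_mem_triS_iff {i i' : Fin 3} {j j' : Fin (D+1)} {k : Fin 3} :
    tvx D i j k ∈ triS D i' j' ↔ i = i' ∧ j = j' := by
  constructor
  · rintro ⟨k', h⟩
    exact ⟨(tvx_inj.1 h).1, (tvx_inj.1 h).2.1⟩
  · rintro ⟨rfl, rfl⟩; exact ⟨k, rfl⟩

lemma fin3_pigeon4 {a b c d : Fin 3} (hab : a ≠ b) (hac : a ≠ c) (had : a ≠ d)
    (hbc : b ≠ c) (hbd : b ≠ d) (hcd : c ≠ d) : False := by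
  omega

lemma no_K5 : ¬ (completeGraph (Fin 5)).IsMinor (GD D) := by
  rintro ⟨f, hne, hconn, hdisj, hadj⟩
  classical
  -- there is an apex-free branch set
  have hfree : ∃ w : Fin 5, ∀ l, apx D l ∉ f w := by
    by_contra h
    push_neg at h
    choose g hg using h
    have hinj : Function.Injective g := by
      intro w w' hww
      by_contra hne'
      exact Set.disjoint_left.1 (hdisj w w' hne') (hg w) (hww ▸ hg w')
    have := Fintype.card_le_of_injective g hinj
    simp at this
  obtain ⟨w, hfw⟩ := hfree
  obtain ⟨u, hu⟩ := hne w
  rcases vert_cases u with ⟨l, rfl⟩ | ⟨i, j, k, rfl⟩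
  · exact hfw l hu
  have hsub : f w ⊆ triS D i j := conn_sub (hconn w) hfw hu ⟨k, rfl⟩
  -- choose a vertex of the block adjacent to each other branch set
  have hy : ∀ w' : Fin 5, ∃ y, w' ≠ w → y ∈ f w' ∧ y ∈ SS D i j ∧ y ≠ tvx D i j k := by
    intro w'
    by_cases hww : w' ≠ w
    · obtain ⟨a, ha, b, hb, hab⟩ := hadj w w' (by simpa using hww.symm)
      have hbs : b ∈ SS D i j := adj_mem_SS hab (hsub ha)
      have hbw : b ∉ f w := Set.disjoint_left.1 (hdisj w' w hww) hb
      exact ⟨b, fun _ => ⟨hb, hbs, fun h => hbw (h ▸ hu)⟩⟩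
    · exact ⟨tvx D i j k, fun h => absurd h hww⟩
  choose Y hY using hy
  -- their images are four distinct elements of a three-element set
  have hinjon : Set.InjOn Y ((Finset.univ.erase w) : Finset (Fin 5)) := by
    intro a ha b hb hYab
    by_contra hne'
    have ha' := (hY a (Finset.ne_of_mem_erase (Finset.mem_coe.1 ha))).1
    have hb' := (hY b (Finset.ne_of_mem_erase (Finset.mem_coe.1 hb))).1
    exact Set.disjoint_left.1 (hdisj a b hne') ha' (hYab ▸ hb')
  have hcard : ((Finset.univ.erase w).image Y).card = 4 := by
    rw [Finset.card_image_of_injOn hinjon, Finset.card_erase_of_mem (Finset.mem_univ w)]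
    simp
  have hsubT : (Finset.univ.erase w).image Y ⊆ (TF D i j).erase (tvx D i j k) := by
    intro x hx
    obtain ⟨a, ha, rfl⟩ := Finset.mem_image.1 hx
    have ha' := hY a (Finset.ne_of_mem_erase ha)
    exact Finset.mem_erase.2 ⟨ha'.2.2, mem_TF_of_SS ha'.2.1⟩
  have h1 := Finset.card_le_card hsubT
  have h2 := Finset.card_erase_of_mem (tvx_mem_TF (D := D) (i := i) (j := j) (k := k))
  have h3 := TF_card (D := D) (i := i) (j := j)
  omega

section K33

variable {f : (Fin 3 ⊕ Fin 3) → Set (Vt D)}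

lemma core_single (hne : ∀ w, (f w).Nonempty)
    (hconn : ∀ w, ((GD D).induce (f w)).Connected)
    (hdisj : ∀ w w', w ≠ w' → Disjoint (f w) (f w'))
    (hadj : ∀ w w', (completeBipartiteGraph (Fin 3) (Fin 3)).Adj w w' →
      ∃ a ∈ f w, ∃ b ∈ f w', (GD D).Adj a b)
    {p : Fin 3} (hfree : ∀ l, apx D l ∉ f (Sum.inl p)) :
    ∃ i j k, tvx D i j k ∈ f (Sum.inl p) ∧ ∀ x ∈ f (Sum.inl p), x = tvx D i j k := by
  classical
  obtain ⟨u, hu⟩ := hne (Sum.inl p)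
  rcases vert_cases u with ⟨l, rfl⟩ | ⟨i, j, k, rfl⟩
  · exact absurd hu (hfree l)
  refine ⟨i, j, k, hu, ?_⟩
  intro x hx
  by_contra hne'
  have hsub : f (Sum.inl p) ⊆ triS D i j := conn_sub (hconn _) hfree hu ⟨k, rfl⟩
  have hy : ∀ b : Fin 3, ∃ y, y ∈ f (Sum.inr b) ∧ y ∈ SS D i j := by
    intro b
    obtain ⟨a, ha, y, hyb, hab⟩ := hadj (Sum.inl p) (Sum.inr b) (by simp)
    exact ⟨y, hyb, adj_mem_SS hab (hsub ha)⟩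
  choose Y hY using hy
  have hinjon : Set.InjOn Y ((Finset.univ : Finset (Fin 3)) : Set (Fin 3)) := by
    intro a _ b _ hYab
    by_contra hne2
    exact Set.disjoint_left.1 (hdisj (Sum.inr a) (Sum.inr b) (by simpa using hne2))
      (hY a).1 (hYab ▸ (hY b).1)
  have hsubT : (Finset.univ : Finset (Fin 3)).image Y ⊆
      ((TF D i j).erase (tvx D i j k)).erase x := by
    intro z hz
    obtain ⟨b, _, rfl⟩ := Finset.mem_image.1 hz
    have h1 : Y b ∉ f (Sum.inl p) :=
      Set.disjoint_left.1 (hdisj (Sum.inr b) (Sum.inl p) (by simp)) (hY b).1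
    exact Finset.mem_erase.2 ⟨fun h => h1 (h ▸ hx),
      Finset.mem_erase.2 ⟨fun h => h1 (h ▸ hu), mem_TF_of_SS (hY b).2⟩⟩
  have hcard : ((Finset.univ : Finset (Fin 3)).image Y).card = 3 := by
    rw [Finset.card_image_of_injOn hinjon]
    simp
  have h1 := Finset.card_le_card hsubT
  have hxT : x ∈ (TF D i j).erase (tvx D i j k) := by
    obtain ⟨k', hk'⟩ := hsub hx
    refine Finset.mem_erase.2 ⟨hne', ?_⟩
    rw [hk']
    exact tvx_mem_TF
  have h2 := Finset.card_erase_of_mem hxT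
  have h3 := Finset.card_erase_of_mem (tvx_mem_TF (D := D) (i := i) (j := j) (k := k))
  have h4 := TF_card (D := D) (i := i) (j := j)
  omega

lemma core (hne : ∀ w, (f w).Nonempty)
    (hconn : ∀ w, ((GD D).induce (f w)).Connected)
    (hdisj : ∀ w w', w ≠ w' → Disjoint (f w) (f w'))
    (hadj : ∀ w w', (completeBipartiteGraph (Fin 3) (Fin 3)).Adj w w' →
      ∃ a ∈ f w, ∃ b ∈ f w', (GD D).Adj a b)
    {p q : Fin 3} (hpq : p ≠ q)
    (hfp : ∀ l, apx D l ∉ f (Sum.inl p)) (hfq : ∀ l, apx D l ∉ f (Sum.inl q)) : False := by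
  classical
  obtain ⟨i, j, k, hu, hup⟩ := core_single hne hconn hdisj hadj hfp
  obtain ⟨i', j', k', hu', huq⟩ := core_single hne hconn hdisj hadj hfq
  have hy : ∀ b : Fin 3, ∃ y, y ∈ f (Sum.inr b) ∧ y ∈ SS D i j ∧ y ≠ tvx D i j k := by
    intro b
    obtain ⟨a, ha, y, hyb, hab⟩ := hadj (Sum.inl p) (Sum.inr b) (by simp)
    rw [hup a ha] at hab
    exact ⟨y, hyb, adj_mem_SS hab ⟨k, rfl⟩, hab.ne'⟩
  have hz : ∀ b : Fin 3, ∃ z, z ∈ f (Sum.inr b) ∧ z ∈ SS D i' j' ∧ z ≠ tvx D i' j' k' := by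
    intro b
    obtain ⟨a, ha, z, hzb, hab⟩ := hadj (Sum.inl q) (Sum.inr b) (by simp)
    rw [huq a ha] at hab
    exact ⟨z, hzb, adj_mem_SS hab ⟨k', rfl⟩, hab.ne'⟩
  choose Y hY using hy
  choose Z hZ using hz
  by_cases hij : i = i' ∧ j = j'
  · obtain ⟨rfl, rfl⟩ := hij
    have huu : tvx D i j k ≠ tvx D i j k' := fun h =>
      Set.disjoint_left.1 (hdisj (Sum.inl p) (Sum.inl q) (by simpa using hpq)) hu (h ▸ hu')
    have hinjon : Set.InjOn Y ((Finset.univ : Finset (Fin 3)) : Set (Fin 3)) := by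
      intro a _ b _ hYab
      by_contra hne2
      exact Set.disjoint_left.1 (hdisj (Sum.inr a) (Sum.inr b) (by simpa using hne2))
        (hY a).1 (hYab ▸ (hY b).1)
    have hsubT : (Finset.univ : Finset (Fin 3)).image Y ⊆
        ((TF D i j).erase (tvx D i j k)).erase (tvx D i j k') := by
      intro z hz'
      obtain ⟨b, _, rfl⟩ := Finset.mem_image.1 hz'
      have h1 : Y b ∉ f (Sum.inl q) :=
        Set.disjoint_left.1 (hdisj (Sum.inr b) (Sum.inl q) (by simp)) (hY b).1
      exact Finset.mem_erase.2 ⟨fun h => h1 (h ▸ hu'),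
        Finset.mem_erase.2 ⟨(hY b).2.2, mem_TF_of_SS (hY b).2.1⟩⟩
    have hcard : ((Finset.univ : Finset (Fin 3)).image Y).card = 3 := by
      rw [Finset.card_image_of_injOn hinjon]
      simp
    have h1 := Finset.card_le_card hsubT
    have hxT : tvx D i j k' ∈ (TF D i j).erase (tvx D i j k) :=
      Finset.mem_erase.2 ⟨fun h => huu h.symm, tvx_mem_TF⟩
    have h2 := Finset.card_erase_of_mem hxT
    have h3 := Finset.card_erase_of_mem (tvx_mem_TF (D := D) (i := i) (j := j) (k := k))
    have h4 := TF_card (D := D) (i := i) (j := j)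
    omega
  · -- different triangles: every right branch set contains an apex
    have hapx : ∀ b : Fin 3, ∃ l, apx D l ∈ f (Sum.inr b) := by
      intro b
      by_contra hf
      push_neg at hf
      have hYt : Y b ∈ triS D i j := by
        rcases (hY b).2.1 with h | h
        · exact absurd (h ▸ (hY b).1) (hf i)
        · exact h
      have hZt : Z b ∈ triS D i' j' := by
        rcases (hZ b).2.1 with h | h
        · exact absurd (h ▸ (hZ b).1) (hf i')
        · exact h
      have hsb : f (Sum.inr b) ⊆ triS D i j := conn_sub (hconn _) hf (hY b).1 hYt
      obtain ⟨k1, hk1⟩ := hsb (hZ b).1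
      rw [hk1] at hZt
      exact hij ⟨(tvx_mem_triS_iff.1 hZt).1, (tvx_mem_triS_iff.1 hZt).2⟩
    choose L hL using hapx
    have hone : ∃ b : Fin 3, apx D i ∉ f (Sum.inr b) := by
      by_contra hall
      push_neg at hall
      exact Set.disjoint_left.1 (hdisj (Sum.inr 0) (Sum.inr 1) (by decide))
        (hall 0) (hall 1)
    obtain ⟨b, hbi⟩ := hone
    have hYt : Y b ∈ triS D i j := by
      rcases (hY b).2.1 with h | h
      · exact absurd (h ▸ (hY b).1) hbi
      · exact h
    have hLb : L b ≠ i := fun h => hbi (h ▸ hL b)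
    have hLS : apx D (L b) ∉ SS D i j := fun h => hLb (apx_mem_SS_iff.1 h)
    exact hbi (conn_pass (hconn _) (hY b).1 hYt (hL b) hLS)

end K33

lemma no_K33 : ¬ (completeBipartiteGraph (Fin 3) (Fin 3)).IsMinor (GD D) := by
  rintro ⟨f, hne, hconn, hdisj, hadj⟩
  classical
  by_cases hL : ∃ p q : Fin 3, p ≠ q ∧ (∀ l, apx D l ∉ f (Sum.inl p)) ∧
      (∀ l, apx D l ∉ f (Sum.inl q))
  · obtain ⟨p, q, h1, h2, h3⟩ := hL
    exact core hne hconn hdisj hadj h1 h2 h3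
  by_cases hR : ∃ p q : Fin 3, p ≠ q ∧ (∀ l, apx D l ∉ f (Sum.inr p)) ∧
      (∀ l, apx D l ∉ f (Sum.inr q))
  · obtain ⟨p, q, h1, h2, h3⟩ := hR
    exact core (f := fun w => f w.swap) (fun w => hne _) (fun w => hconn _)
      (fun w w' h => hdisj _ _ (fun hh => h (by simpa using congrArg Sum.swap hh)))
      (fun w w' h => hadj w.swap w'.swap (by cases w <;> cases w' <;> simp_all))
      h1 h2 h3
  -- both sides have at least two branch sets containing an apex
  push_neg at hL hR
  have getTwo : ∀ g : Fin 3 → Set (Vt D),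
      (∀ p q : Fin 3, p ≠ q → (∀ l, apx D l ∉ g p) → ∃ l, apx D l ∈ g q) →
      ∃ p q : Fin 3, p ≠ q ∧ (∃ l, apx D l ∈ g p) ∧ (∃ l, apx D l ∈ g q) := by
    intro g hg
    by_cases c0 : ∀ l, apx D l ∉ g 0
    · exact ⟨1, 2, by decide, hg 0 1 (by decide) c0, hg 0 2 (by decide) c0⟩
    · push_neg at c0
      by_cases c1 : ∀ l, apx D l ∉ g 1
      · exact ⟨0, 2, by decide, c0, hg 1 2 (by decide) c1⟩
      · push_neg at c1
        exact ⟨0, 1, by decide, c0, c1⟩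
  obtain ⟨p1, p2, hp, ⟨l1, hl1⟩, ⟨l2, hl2⟩⟩ := getTwo (fun p => f (Sum.inl p)) hL
  obtain ⟨q1, q2, hq, ⟨l3, hl3⟩, ⟨l4, hl4⟩⟩ := getTwo (fun p => f (Sum.inr p)) hR
  have hdist : ∀ (w w' : Fin 3 ⊕ Fin 3) (l l' : Fin 3), w ≠ w' →
      apx D l ∈ f w → apx D l' ∈ f w' → l ≠ l' := by
    intro w w' l l' hww hl hl' he
    exact Set.disjoint_left.1 (hdisj w w' hww) hl (by rw [he]; exact hl')
  exact fin3_pigeon4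
    (hdist _ _ _ _ (by simpa using hp) hl1 hl2)
    (hdist _ _ _ _ (by simp) hl1 hl3)
    (hdist _ _ _ _ (by simp) hl1 hl4)
    (hdist _ _ _ _ (by simp) hl2 hl3)
    (hdist _ _ _ _ (by simp) hl2 hl4)
    (hdist _ _ _ _ (by simpa using hq) hl3 hl4)

lemma not_colorable : ¬ (GD D).DefectiveColorable ![0, 0, D] := by
  rintro ⟨f, hf⟩
  classical
  -- any two adjacent vertices of the same color have color 2
  have key : ∀ a b : Vt D, (GD D).Adj a b → f a = f b → f a = 2 := by
    intro a b hab hfab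
    by_contra h2
    have hd : (![0, 0, D] : Fin 3 → ℕ) (f a) = 0 := by
      have h01 : ∀ x : Fin 3, x ≠ 2 → x = 0 ∨ x = 1 := by decide
      have : f a = 0 ∨ f a = 1 := h01 _ h2
      rcases this with h | h <;> rw [h] <;> rfl
    have hpos : 0 < {u | (GD D).Adj a u ∧ f u = f a}.ncard :=
      (Set.ncard_pos (Set.toFinite _)).2 ⟨b, hab, hfab.symm⟩
    have := hf a
    rw [hd] at this
    omega
  -- no apex has color 2
  have hapx : ∀ i : Fin 3, f (apx D i) ≠ 2 := by
    intro i hfi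
    have htri : ∀ j : Fin (D+1), ∃ k, f (tvx D i j k) = 2 := by
      intro j
      by_contra h
      push_neg at h
      have h0 := h 0
      have h1 := h 1
      have h2 := h 2
      have h3 : ∀ x y z : Fin 3, x ≠ 2 → y ≠ 2 → z ≠ 2 → x = y ∨ x = z ∨ y = z := by decide
      have hor : f (tvx D i j 0) = f (tvx D i j 1) ∨ f (tvx D i j 0) = f (tvx D i j 2) ∨
          f (tvx D i j 1) = f (tvx D i j 2) := h3 _ _ _ h0 h1 h2
      rcases hor with he | he | he
      · exact h0 (key _ _ (adj_tvx_tvx (by decide)) he)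
      · exact h0 (key _ _ (adj_tvx_tvx (by decide)) he)
      · exact h1 (key _ _ (adj_tvx_tvx (by decide)) he)
    choose g hg using htri
    have hsub : (((Finset.univ : Finset (Fin (D+1))).image
        (fun j => tvx D i j (g j)) : Finset (Vt D)) : Set (Vt D)) ⊆
        {u | (GD D).Adj (apx D i) u ∧ f u = f (apx D i)} := by
      intro x hx
      rw [Finset.mem_coe, Finset.mem_image] at hx
      obtain ⟨j, _, rfl⟩ := hx
      exact ⟨adj_apx_tvx, by rw [hg j, hfi]⟩
    have hcard : ((Finset.univ : Finset (Fin (D+1))).image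
        (fun j => tvx D i j (g j))).card = D + 1 := by
      rw [Finset.card_image_of_injective _ (fun a b hab => (tvx_inj.1 hab).2.1)]
      simp
    have hle := Set.ncard_le_ncard hsub (Set.toFinite _)
    rw [Set.ncard_coe_finset, hcard] at hle
    have hcol := hf (apx D i)
    have hD : (![0, 0, D] : Fin 3 → ℕ) (f (apx D i)) = D := by rw [hfi]; rfl
    omega
  -- the three apexes form a triangle colored with two colors
  have h0 := hapx 0
  have h1 := hapx 1
  have h2 := hapx 2
  have h3 : ∀ x y z : Fin 3, x ≠ 2 → y ≠ 2 → z ≠ 2 → x = y ∨ x = z ∨ y = z := by decide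
  have hor : f (apx D 0) = f (apx D 1) ∨ f (apx D 0) = f (apx D 2) ∨
      f (apx D 1) = f (apx D 2) := h3 _ _ _ h0 h1 h2
  rcases hor with he | he | he
  · exact h0 (key _ _ (adj_apx_apx (by decide)) he)
  · exact h0 (key _ _ (adj_apx_apx (by decide)) he)
  · exact h1 (key _ _ (adj_apx_apx (by decide)) he)

end X5

theorem stmt5 (D : ℕ) :
    ∃ (V : Type) (_ : Fintype V) (G : SimpleGraph V), G.Planar ∧
      (∀ (v : V) (w : G.Walk v v), w.IsCycle → w.length = 3 ∨ w.length = 4) ∧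
      ¬ G.DefectiveColorable ![0, 0, D] :=
  ⟨X5.Vt D, inferInstance, X5.GD D, ⟨X5.no_K5, X5.no_K33⟩,
    fun _ w hc => X5.cycle_len w hc, X5.not_colorable⟩
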